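/- arXiv:2107.11761 — 2 statements merged into one kernel-verified Lean document; each statement's English description precedes it below -/
import Mathlib

section
/- For u in the Schwartz class on ℝ and λ ∈ ℝ, on the set {x : u(x) > λ} one has the pointwise inequality Λ^α u(x) ≥ Λ^α (u−λ)_+ (x), where Λ^α v(x) = C_α P.V. ∫_ℝ (v(x)−v(y))/|x−y|^{1+α} dy with 0 < α < 2. -/
open Filter Set MeasureTheory


lemma aux_int (x δ β : ℝ) (hδ : 0 < δ) (hβ : β < -1) :
    IntegrableOn (fun y : ℝ => |x - y| ^ β) {y : ℝ | δ < |x - y|} := by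
  have h0 : IntegrableOn (fun z : ℝ => |z| ^ β) {z : ℝ | δ < |z|} := by
    have hset : {z : ℝ | δ < |z|} = Iio (-δ) ∪ Ioi δ := by
      ext z
      simp only [mem_setOf_eq, lt_abs, mem_union, mem_Iio, mem_Ioi, lt_neg]
      tauto
    rw [hset]
    apply IntegrableOn.union
    · have hneg : IntegrableOn (fun z : ℝ => |(-z : ℝ)| ^ β) (Neg.neg ⁻¹' (Ioi δ)) := by
        rw [show (fun z : ℝ => |(-z : ℝ)| ^ β) = (fun z : ℝ => |z| ^ β) ∘ Neg.neg from rfl,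
          (Measure.measurePreserving_neg (volume : Measure ℝ)).integrableOn_comp_preimage
          (MeasurableEquiv.neg ℝ).measurableEmbedding]
        exact (integrableOn_Ioi_rpow_of_lt hβ hδ).congr_fun
          (fun z hz => by rw [abs_of_pos (hδ.trans (mem_Ioi.mp hz))]) measurableSet_Ioi
      have hpre : Neg.neg ⁻¹' (Ioi δ) = Iio (-δ) := by ext z; simp [lt_neg]
      rw [hpre] at hneg
      exact hneg.congr_fun (fun z _ => by dsimp only; rw [abs_neg]) measurableSet_Iio
    · exact (integrableOn_Ioi_rpow_of_lt hβ hδ).congr_fun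
        (fun z hz => by rw [abs_of_pos (hδ.trans (mem_Ioi.mp hz))]) measurableSet_Ioi
  have h1 : IntegrableOn ((fun z : ℝ => |z| ^ β) ∘ (fun y => x - y))
      ((fun y : ℝ => x - y) ⁻¹' {z : ℝ | δ < |z|}) := by
    rw [(Measure.measurePreserving_sub_left (volume : Measure ℝ) x).integrableOn_comp_preimage
      (MeasurableEquiv.subLeft x).measurableEmbedding]
    exact h0
  exact h1

lemma aux_int2 (x δ α : ℝ) (hδ : 0 < δ) (hα : 0 < α) (v : ℝ → ℝ) (hv : Measurable v)
    (K : ℝ) (hK : ∀ y, |v y| ≤ K) :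
    IntegrableOn (fun y : ℝ => v y / |x - y| ^ (1 + α)) {y : ℝ | δ < |x - y|} := by
  have hβ : (-(1 + α) : ℝ) < -1 := by linarith
  have hS : MeasurableSet {y : ℝ | δ < |x - y|} :=
    (isOpen_lt continuous_const (by fun_prop)).measurableSet
  have hg : IntegrableOn (fun y : ℝ => K * |x - y| ^ (-(1 + α))) {y : ℝ | δ < |x - y|} :=
    (aux_int x δ (-(1 + α)) hδ hβ).const_mul K
  refine hg.integrable.mono' ?_ ?_
  · apply Measurable.aestronglyMeasurable
    exact hv.div ((measurable_const.sub measurable_id).abs.pow_const _)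
  · rw [ae_restrict_iff' hS]
    filter_upwards with y hy
    have hxy : (0:ℝ) < |x - y| := lt_trans hδ hy
    have hd : (0:ℝ) < |x - y| ^ (1 + α) := Real.rpow_pos_of_pos hxy _
    rw [Real.rpow_neg (abs_nonneg _)]
    rw [Real.norm_eq_abs, abs_div, abs_of_pos hd, div_eq_mul_inv]
    gcongr
    exact hK y

/-- For `u` Schwartz on `ℝ`, `λ ∈ ℝ`, `0 < α < 2`, and a point
`x` with `u(x) > λ`: if the principal-value integrals defining
`Λ^α u (x)` and `Λ^α (u−λ)_+ (x)` (with normalizing constant `C_α > 0`)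
converge to `A` and `B` respectively, then `Λ^α u(x) ≥ Λ^α (u−λ)_+(x)`,
i.e. `C_α · A ≥ C_α · B`. -/
theorem stmt6 (α : ℝ) (hα0 : 0 < α) (hα2 : α < 2)
    (Cα : ℝ) (hC : 0 < Cα) (u : SchwartzMap ℝ ℝ) (lam x : ℝ)
    (hx : lam < u x) (A B : ℝ)
    (hA : Tendsto
      (fun δ : ℝ => ∫ y in {y : ℝ | δ < |x - y|},
        (u x - u y) / |x - y| ^ (1 + α))
      (nhdsWithin 0 (Ioi 0)) (nhds A))
    (hB : Tendsto
      (fun δ : ℝ => ∫ y in {y : ℝ | δ < |x - y|},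
        (max (u x - lam) 0 - max (u y - lam) 0) / |x - y| ^ (1 + α))
      (nhdsWithin 0 (Ioi 0)) (nhds B)) :
    Cα * B ≤ Cα * A := by
  obtain ⟨M, hM⟩ : ∃ M, ∀ y, |u y| ≤ M := by
    have h := u.decay 0 0
    obtain ⟨C, -, hC'⟩ := h
    refine ⟨C, fun y => ?_⟩
    have := hC' y
    simpa [norm_iteratedFDeriv_zero] using this
  set K : ℝ := |u x| + M + 2 * |lam| with hKdef
  have hmaxabs : ∀ a : ℝ, |max a 0| ≤ |a| := fun a => by
    rw [abs_of_nonneg (le_max_right a 0)]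
    exact max_le (le_abs_self a) (abs_nonneg a)
  have hBA : B ≤ A := by
    apply le_of_tendsto_of_tendsto hB hA
    filter_upwards [self_mem_nhdsWithin] with δ (hδ : δ ∈ Ioi 0)
    have hδ0 : (0:ℝ) < δ := hδ
    have hS : MeasurableSet {y : ℝ | δ < |x - y|} :=
      (isOpen_lt continuous_const (by fun_prop)).measurableSet
    have hintB : IntegrableOn
        (fun y : ℝ => (max (u x - lam) 0 - max (u y - lam) 0) / |x - y| ^ (1 + α))
        {y : ℝ | δ < |x - y|} := by
      apply aux_int2 x δ α hδ0 hα0 _ (by fun_prop) K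
      intro y
      calc |max (u x - lam) 0 - max (u y - lam) 0|
          ≤ |max (u x - lam) 0| + |max (u y - lam) 0| := abs_sub _ _
        _ ≤ |u x - lam| + |u y - lam| := add_le_add (hmaxabs _) (hmaxabs _)
        _ ≤ (|u x| + |lam|) + (|u y| + |lam|) := add_le_add (abs_sub _ _) (abs_sub _ _)
        _ ≤ K := by have := hM y; rw [hKdef]; linarith
    have hintA : IntegrableOn (fun y : ℝ => (u x - u y) / |x - y| ^ (1 + α))
        {y : ℝ | δ < |x - y|} := by
      apply aux_int2 x δ α hδ0 hα0 _ (by fun_prop) K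
      intro y
      calc |u x - u y| ≤ |u x| + |u y| := abs_sub _ _
        _ ≤ K := by have := hM y; have := abs_nonneg lam; rw [hKdef]; linarith
    apply setIntegral_mono_on hintB hintA hS
    intro y hy
    have hxy : (0:ℝ) < |x - y| := lt_trans hδ0 hy
    have hd : (0:ℝ) < |x - y| ^ (1 + α) := Real.rpow_pos_of_pos hxy _
    have h1 : max (u x - lam) 0 = u x - lam := max_eq_left (by linarith)
    have h2 : u y - lam ≤ max (u y - lam) 0 := le_max_left _ _
    apply div_le_div_of_nonneg_right ?_ hd.le
    rw [h1]; linarith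
  nlinarith
end

section
/- Let (E_n)_{n≥0} be a sequence of nonnegative reals satisfying E_n ≤ C·2^{3n}·E_{n−1}² + C·2^{4n}·E_{n−1}^{3/2} for all n ≥ 1, where C > 0. If E_0 is sufficiently small (depending only on C), then E_n → 0 as n → ∞. -/
open Filter

/-- If `E_n ≥ 0` satisfies
`E_n ≤ C·2^{3n}·E_{n−1}² + C·2^{4n}·E_{n−1}^{3/2}` for `n ≥ 1` with `C > 0`,
then there is a threshold `δ(C) > 0` such that `E_0 ≤ δ` implies `E_n → 0`. -/
theorem stmt10 (C : ℝ) (hC : 0 < C) :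
    ∃ δ : ℝ, 0 < δ ∧ ∀ E : ℕ → ℝ, (∀ n, 0 ≤ E n) →
      (∀ n, 1 ≤ n →
        E n ≤ C * 2 ^ (3 * n) * (E (n - 1)) ^ 2
              + C * 2 ^ (4 * n) * (E (n - 1)) ^ ((3:ℝ) / 2)) →
      E 0 ≤ δ → Tendsto E atTop (nhds 0) := by
  set d : ℝ := min 1 (((32768 * C)⁻¹) ^ 2) with hd
  have hdpos : 0 < d := by
    apply lt_min one_pos
    positivity
  have hd1 : d ≤ 1 := min_le_left _ _
  set s : ℝ := Real.sqrt d with hs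
  have hs0 : 0 ≤ s := Real.sqrt_nonneg _
  have hssq : s ^ 2 = d := Real.sq_sqrt hdpos.le
  have hsmall : s ≤ (32768 * C)⁻¹ := by
    rw [hs]
    have := Real.sqrt_le_sqrt (min_le_right 1 (((32768 * C)⁻¹) ^ 2))
    rwa [Real.sqrt_sq (by positivity)] at this
  have hds : d ≤ s := by
    nlinarith [Real.sq_sqrt hdpos.le, Real.sqrt_nonneg d]
  refine ⟨d, hdpos, ?_⟩
  intro E hE0 hrec hE
  -- the key inductive bound
  have key : ∀ n : ℕ, E n ≤ d * (2:ℝ) ^ (-(10:ℤ) * n) := by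
    intro n
    induction n with
    | zero => simpa using hE
    | succ n ih =>
      have h1 := hrec (n + 1) (by omega)
      simp only [Nat.add_sub_cancel] at h1
      have hpow : (0:ℝ) < (2:ℝ) ^ (-(10:ℤ) * n) := by positivity
      have hEn : 0 ≤ E n := hE0 n
      have hrhs : 0 ≤ d * (2:ℝ) ^ (-(10:ℤ) * n) := by positivity
      -- bound the square term
      have hsq : (E n) ^ 2 ≤ d ^ 2 * (2:ℝ) ^ (-(20:ℤ) * n) := by
        have := pow_le_pow_left₀ hEn ih 2
        calc (E n)^2 ≤ (d * (2:ℝ) ^ (-(10:ℤ) * n))^2 := this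
          _ = d^2 * ((2:ℝ) ^ (-(10:ℤ) * n) * (2:ℝ) ^ (-(10:ℤ) * n)) := by ring
          _ = d^2 * (2:ℝ) ^ (-(20:ℤ) * n) := by
              rw [← zpow_add₀ (two_ne_zero)]; ring_nf
      -- the 3/2 power: x^(3/2) = x * sqrt x
      have hsqrtpow : Real.sqrt ((2:ℝ) ^ (-(10:ℤ) * n)) = (2:ℝ) ^ (-(5:ℤ) * n) := by
        rw [show (-(10:ℤ) * n) = (-(5:ℤ) * n) + (-(5:ℤ) * n) by ring,
          zpow_add₀ (two_ne_zero)]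
        exact Real.sqrt_mul_self (by positivity)
      have h32 : (E n) ^ ((3:ℝ)/2) ≤ d * s * (2:ℝ) ^ (-(15:ℤ) * n) := by
        have hmono : (E n) ^ ((3:ℝ)/2) ≤ (d * (2:ℝ) ^ (-(10:ℤ) * n)) ^ ((3:ℝ)/2) :=
          Real.rpow_le_rpow hEn ih (by norm_num)
        have heq : (d * (2:ℝ) ^ (-(10:ℤ) * n)) ^ ((3:ℝ)/2)
            = d * s * (2:ℝ) ^ (-(15:ℤ) * n) := by
          rw [show (3:ℝ)/2 = 1 + 1/2 by norm_num,
            Real.rpow_add' hrhs (by norm_num), Real.rpow_one,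
            ← Real.sqrt_eq_rpow, Real.sqrt_mul hdpos.le, hsqrtpow, ← hs,
            show (-(15:ℤ) * n) = (-(10:ℤ) * n) + (-(5:ℤ) * n) by ring,
            zpow_add₀ (two_ne_zero)]
          ring
        exact hmono.trans_eq heq
      -- power comparisons
      have hA : (2:ℝ) ^ (3 * (n + 1)) * (2:ℝ) ^ (-(20:ℤ) * n)
          ≤ 2 ^ (13:ℤ) * (2:ℝ) ^ (-(10:ℤ) * (n + 1)) := by
        rw [← zpow_natCast (2:ℝ) (3 * (n + 1)), ← zpow_add₀ (two_ne_zero),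
          ← zpow_add₀ (two_ne_zero)]
        apply zpow_le_zpow_right₀ one_le_two
        push_cast
        omega
      have hB : (2:ℝ) ^ (4 * (n + 1)) * (2:ℝ) ^ (-(15:ℤ) * n)
          ≤ 2 ^ (14:ℤ) * (2:ℝ) ^ (-(10:ℤ) * (n + 1)) := by
        rw [← zpow_natCast (2:ℝ) (4 * (n + 1)), ← zpow_add₀ (two_ne_zero),
          ← zpow_add₀ (two_ne_zero)]
        apply zpow_le_zpow_right₀ one_le_two
        push_cast
        omega
      have hP : (0:ℝ) < (2:ℝ) ^ (-(10:ℤ) * ((n:ℤ) + 1)) := by positivity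
      -- combine
      have step1 : E (n + 1)
          ≤ C * d^2 * ((2:ℝ) ^ (3 * (n + 1)) * (2:ℝ) ^ (-(20:ℤ) * n))
            + C * (d * s) * ((2:ℝ) ^ (4 * (n + 1)) * (2:ℝ) ^ (-(15:ℤ) * n)) := by
        have t1 : C * 2 ^ (3 * (n + 1)) * (E n) ^ 2
            ≤ C * d^2 * ((2:ℝ) ^ (3 * (n + 1)) * (2:ℝ) ^ (-(20:ℤ) * n)) := by
          have hp : (0:ℝ) ≤ C * 2 ^ (3 * (n + 1)) := by positivity
          calc C * 2 ^ (3 * (n + 1)) * (E n) ^ 2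
              ≤ C * 2 ^ (3 * (n + 1)) * (d ^ 2 * (2:ℝ) ^ (-(20:ℤ) * n)) :=
                mul_le_mul_of_nonneg_left hsq hp
            _ = C * d^2 * ((2:ℝ) ^ (3 * (n + 1)) * (2:ℝ) ^ (-(20:ℤ) * n)) := by ring
        have t2 : C * 2 ^ (4 * (n + 1)) * (E n) ^ ((3:ℝ)/2)
            ≤ C * (d * s) * ((2:ℝ) ^ (4 * (n + 1)) * (2:ℝ) ^ (-(15:ℤ) * n)) := by
          have hp : (0:ℝ) ≤ C * 2 ^ (4 * (n + 1)) := by positivity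
          calc C * 2 ^ (4 * (n + 1)) * (E n) ^ ((3:ℝ)/2)
              ≤ C * 2 ^ (4 * (n + 1)) * (d * s * (2:ℝ) ^ (-(15:ℤ) * n)) :=
                mul_le_mul_of_nonneg_left h32 hp
            _ = C * (d * s) * ((2:ℝ) ^ (4 * (n + 1)) * (2:ℝ) ^ (-(15:ℤ) * n)) := by ring
        exact h1.trans (add_le_add t1 t2)
      have step2 : E (n + 1)
          ≤ (C * d^2 * 2^(13:ℤ) + C * (d * s) * 2^(14:ℤ))
              * (2:ℝ) ^ (-(10:ℤ) * ((n:ℤ) + 1)) := by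
        refine step1.trans ?_
        have e1 : C * d^2 * ((2:ℝ) ^ (3 * (n + 1)) * (2:ℝ) ^ (-(20:ℤ) * n))
            ≤ C * d^2 * (2 ^ (13:ℤ) * (2:ℝ) ^ (-(10:ℤ) * (n + 1))) :=
          mul_le_mul_of_nonneg_left hA (by positivity)
        have e2 : C * (d * s) * ((2:ℝ) ^ (4 * (n + 1)) * (2:ℝ) ^ (-(15:ℤ) * n))
            ≤ C * (d * s) * (2 ^ (14:ℤ) * (2:ℝ) ^ (-(10:ℤ) * (n + 1))) :=
          mul_le_mul_of_nonneg_left hB (by positivity)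
        linarith [e1, e2]
      have coeff : C * d^2 * 2^(13:ℤ) + C * (d * s) * 2^(14:ℤ) ≤ d := by
        have h13 : (2:ℝ)^(13:ℤ) = 8192 := by norm_num
        have h14 : (2:ℝ)^(14:ℤ) = 16384 := by norm_num
        rw [h13, h14]
        have f1 : C * d^2 ≤ C * (d * s) := by
          have := mul_le_mul_of_nonneg_left hds (mul_nonneg hC.le hdpos.le)
          nlinarith [this]
        have f2 : C * (d * s) ≤ d * (1/32768) := by
          have hCs : C * s ≤ 1/32768 := by
            have e : C * (32768 * C)⁻¹ = 1/32768 := by field_simp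
            calc C * s ≤ C * (32768 * C)⁻¹ := mul_le_mul_of_nonneg_left hsmall hC.le
              _ = 1/32768 := e
          calc C * (d * s) = d * (C * s) := by ring
            _ ≤ d * (1/32768) := mul_le_mul_of_nonneg_left hCs hdpos.le
        nlinarith [hdpos.le]
      have : ((n:ℤ) + 1) = ((n + 1 : ℕ) : ℤ) := by push_cast; ring
      rw [this] at step2 hP
      calc E (n + 1) ≤ _ := step2
        _ ≤ d * (2:ℝ) ^ (-(10:ℤ) * ((n+1:ℕ):ℤ)) :=
          mul_le_mul_of_nonneg_right coeff hP.le
  -- squeeze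
  have hbound : ∀ n : ℕ, E n ≤ d * ((1:ℝ)/1024) ^ n := by
    intro n
    have : (2:ℝ) ^ (-(10:ℤ) * n) = ((1:ℝ)/1024) ^ n := by
      rw [show (-(10:ℤ) * n) = ((-10 : ℤ)) * n by ring, zpow_mul]
      norm_num
    rw [← this]
    exact key n
  have hlim : Tendsto (fun n : ℕ => d * ((1:ℝ)/1024) ^ n) atTop (nhds 0) := by
    have := (tendsto_pow_atTop_nhds_zero_of_lt_one (by norm_num : (0:ℝ) ≤ 1/1024)
      (by norm_num : (1:ℝ)/1024 < 1)).const_mul d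
    simpa using this
  exact squeeze_zero hE0 hbound hlim
end
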